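/- arXiv:math/0105176 — 2 statements merged into one kernel-verified Lean document; each statement's English description precedes it below -/
import Mathlib

section
/- For every integer p ≥ 1, there exists a polynomial A_p(t,δ) ∈ ℚ[t,δ] of degree ≤ p−1 in t such that the identity (y − δx)^p − (1−δ)^p x^p = (y − x) ∫₀¹ A_p(t,δ) ((1−t)x + ty)^{p−1} dt holds in ℝ[x,y,δ], i.e. for all real x, y, δ. -/
open Polynomial Finset intervalIntegral

lemma mono_int (n : ℕ) : ∫ t in (0:ℝ)..1, t ^ n = 1 / ((n : ℝ) + 1) := by
  rw [integral_pow]; norm_num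

noncomputable def Hmat (p : ℕ) : Matrix (Fin p) (Fin p) ℚ :=
  fun i j => 1 / ((i : ℚ) + (j : ℚ) + 1)

lemma hilbert_surj (p : ℕ) : Function.Surjective ((Hmat p).mulVecLin) := by
  rw [← LinearMap.injective_iff_surjective]
  rw [← LinearMap.ker_eq_bot, LinearMap.ker_eq_bot']
  intro c hc
  set P : ℝ[X] := ∑ j : Fin p, C ((c j : ℝ)) * X ^ (j : ℕ) with hP
  have hintc : ∀ n : ℕ, IntervalIntegrable (fun t : ℝ => P.eval t * t ^ n) MeasureTheory.volume 0 1 :=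
    fun n => (P.continuous.mul (continuous_pow n)).intervalIntegrable 0 1
  have hmom : ∀ i : Fin p, (∫ t in (0:ℝ)..1, P.eval t * t ^ (i : ℕ)) = 0 := by
    intro i
    have h1 : (fun t : ℝ => P.eval t * t ^ (i : ℕ)) =
        fun t : ℝ => ∑ j : Fin p, (c j : ℝ) * t ^ ((j : ℕ) + (i : ℕ)) := by
      funext t
      simp only [hP, eval_finset_sum, eval_mul, eval_C, eval_pow, eval_X, Finset.sum_mul, pow_add]
      exact Finset.sum_congr rfl fun _ _ => mul_assoc _ _ _
    rw [h1, intervalIntegral.integral_finset_sum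
      (f := fun j (t : ℝ) => (c j : ℝ) * t ^ ((j : ℕ) + (i : ℕ))) (fun j _ =>
      ((continuous_const.mul (continuous_pow _) : Continuous fun t : ℝ =>
        (c j : ℝ) * t ^ ((j : ℕ) + (i : ℕ))).intervalIntegrable 0 1))]
    have h2 : ∀ j : Fin p, (∫ t in (0:ℝ)..1, (c j : ℝ) * t ^ ((j : ℕ) + (i : ℕ)))
        = (c j : ℝ) * (1 / (((j : ℕ) : ℝ) + (i : ℕ) + 1)) := by
      intro j
      rw [intervalIntegral.integral_const_mul, mono_int]
      push_cast; ring_nf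
    rw [Finset.sum_congr rfl fun j _ => h2 j]
    have h3 := congrFun hc i
    have h4 : ((Hmat p).mulVecLin c) i = ∑ j : Fin p, c j / ((i : ℚ) + (j : ℚ) + 1) := by
      simp only [Hmat, Matrix.mulVecLin_apply, Matrix.mulVec, dotProduct, div_eq_mul_inv]
      exact Finset.sum_congr rfl fun _ _ => by ring
    rw [h4] at h3
    have h5 : ((∑ j : Fin p, c j / ((i : ℚ) + (j : ℚ) + 1) : ℚ) : ℝ) = 0 := by
      rw [h3]; norm_num
    push_cast at h5
    rw [← h5]
    exact Finset.sum_congr rfl fun j _ => by ring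
  have hsq : (∫ t in (0:ℝ)..1, (P.eval t) ^ 2) = 0 := by
    have h1 : (fun t : ℝ => (P.eval t) ^ 2) =
        fun t : ℝ => ∑ i : Fin p, (c i : ℝ) * (P.eval t * t ^ (i : ℕ)) := by
      funext t
      simp only [hP, eval_finset_sum, eval_mul, eval_C, eval_pow, eval_X]
      rw [sq, Finset.sum_mul]
      exact Finset.sum_congr rfl fun i _ => by ring
    rw [h1, intervalIntegral.integral_finset_sum
      (f := fun i (t : ℝ) => (c i : ℝ) * (P.eval t * t ^ (i : ℕ))) (fun i _ =>
      (continuous_const.mul (P.continuous.mul (continuous_pow _)) : Continuous fun t : ℝ =>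
        (c i : ℝ) * (P.eval t * t ^ (i : ℕ))).intervalIntegrable 0 1)]
    simp only [intervalIntegral.integral_const_mul]
    exact Finset.sum_eq_zero fun i _ => by rw [hmom i, mul_zero]
  have hP0 : P = 0 := by
    by_contra hPne
    have hfin : Set.Finite {x : ℝ | P.IsRoot x} := Polynomial.finite_setOf_isRoot hPne
    obtain ⟨t₀, ht₀⟩ : ((Set.Ioo (0:ℝ) 1) \ {x | P.IsRoot x}).Nonempty := by
      exact ((Set.Ioo_infinite (by norm_num)).diff hfin).nonempty
    have hpos : 0 < ∫ t in (0:ℝ)..1, (P.eval t) ^ 2 := by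
      rw [integral_pos_iff_support_of_nonneg_ae
        (Filter.Eventually.of_forall fun t => sq_nonneg _)
        ((P.continuous.pow 2).intervalIntegrable 0 1)]
      refine ⟨by norm_num, ?_⟩
      have hopen : IsOpen ({t : ℝ | P.eval t ≠ 0} ∩ Set.Ioo 0 1) :=
        (isOpen_ne.preimage P.continuous).inter isOpen_Ioo
      refine lt_of_lt_of_le (hopen.measure_pos MeasureTheory.volume ⟨t₀, ht₀.2, ht₀.1⟩) ?_
      apply MeasureTheory.measure_mono
      rintro t ⟨h1, h2⟩
      exact ⟨pow_ne_zero 2 h1, Set.Ioo_subset_Ioc_self h2⟩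
    rw [hsq] at hpos; exact lt_irrefl 0 hpos
  funext j
  have hco := congrArg (fun q => Polynomial.coeff q (j : ℕ)) hP0
  simp only [hP, Polynomial.finset_sum_coeff, Polynomial.coeff_C_mul, Polynomial.coeff_X_pow,
    Polynomial.coeff_zero] at hco
  have hiff : ∀ j' : Fin p, ((j' : ℕ) = (j : ℕ)) = (j' = j) := fun j' => by
    simp [Fin.val_eq_val]
  have hiff2 : ∀ j' : Fin p, ((j : ℕ) = (j' : ℕ)) = (j = j') := fun j' => by
    simp [Fin.val_eq_val]
  simp only [hiff, hiff2, mul_ite, mul_one, mul_zero, Finset.sum_ite_eq, Finset.sum_ite_eq',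
    Finset.mem_univ, if_true] at hco
  exact_mod_cast hco


lemma neg_binom (n N : ℕ) (hn : n ≤ N) (δ : ℝ) :
    ∑ m ∈ Finset.range (N+1), (-δ)^m * (n.choose m : ℝ) = (1-δ)^n := by
  rw [show (1:ℝ)-δ = -δ+1 by ring, add_pow]
  simp only [one_pow, mul_one]
  symm
  apply Finset.sum_subset (Finset.range_subset_range.mpr (by omega))
  intro m _ hm
  rw [Finset.mem_range, not_lt] at hm
  rw [Nat.choose_eq_zero_of_lt (by omega), Nat.cast_zero, mul_zero]



/-- polynomial identity (4.5). For every `p ≥ 1` there exists a polynomial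
`A_p(t,δ) = ∑_{0 ≤ m ≤ p} a_m(t) δ^m` with `a_m ∈ ℚ[t]` of degree ≤ p−1, such that
`(y − δx)^p − (1−δ)^p x^p = (y−x) ∫₀¹ A_p(t,δ) ((1−t)x + ty)^{p−1} dt` for all real `x, y, δ`. -/
theorem stmt_0 (p : ℕ) (hp : 1 ≤ p) :
    ∃ a : Fin (p + 1) → Polynomial ℚ,
      (∀ m, (a m).natDegree ≤ p - 1) ∧
      ∀ x y δ : ℝ,
        (y - δ * x) ^ p - (1 - δ) ^ p * x ^ p =
          (y - x) * ∫ t in (0:ℝ)..1,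
            (∑ m : Fin (p + 1), ((a m).map (algebraMap ℚ ℝ)).eval t * δ ^ (m : ℕ)) *
              ((1 - t) * x + t * y) ^ (p - 1) := by
  classical
  choose c hc using fun m : Fin (p+1) => hilbert_surj p (fun k : Fin p =>
      ((-1)^(m:ℕ) * (p:ℚ) * ((p-1-(k:ℕ)).choose (m:ℕ) : ℚ)) / ((k:ℕ)+1))
  refine ⟨fun m => ∑ j : Fin p, Polynomial.C (c m j) * Polynomial.X ^ (j:ℕ), ?_, ?_⟩
  · intro m
    apply Polynomial.natDegree_sum_le_of_forall_le
    intro j _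
    exact le_trans (Polynomial.natDegree_C_mul_X_pow_le _ _) (by omega)
  intro x y δ
  set u := y - x with hu
  set w := (1-δ)*x with hw
  set S : ℝ := ∑ k ∈ Finset.range p,
      (u^k * x^(p-1-k) * ((p-1).choose k : ℝ)) * ((p:ℝ)/((k:ℝ)+1) * (1-δ)^(p-1-k)) with hS
  set K : Fin (p+1) → Fin p → ℕ → ℝ := fun m j k =>
      (c m j : ℝ) * δ^(m:ℕ) * (u^k * x^(p-1-k) * ((p-1).choose k : ℝ)) with hK
  -- step 1: the integral equals S
  have hInt : (∫ t in (0:ℝ)..1,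
      (∑ m : Fin (p + 1),
        (((fun m => ∑ j : Fin p, Polynomial.C (c m j) * Polynomial.X ^ (j:ℕ)) m).map
          (algebraMap ℚ ℝ)).eval t * δ ^ (m : ℕ)) *
        ((1 - t) * x + t * y) ^ (p - 1)) = S := by
    have hg : ∀ t : ℝ,
        (∑ m : Fin (p + 1),
          (((∑ j : Fin p, Polynomial.C (c m j) * Polynomial.X ^ (j:ℕ)).map
            (algebraMap ℚ ℝ)).eval t * δ ^ (m : ℕ))) *
          ((1 - t) * x + t * y) ^ (p - 1)
        = ∑ m : Fin (p+1), ∑ j : Fin p, ∑ k ∈ Finset.range p, K m j k * t^((j:ℕ)+k) := by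
      intro t
      have he : ∀ m : Fin (p+1),
          ((∑ j : Fin p, Polynomial.C (c m j) * Polynomial.X ^ (j:ℕ)).map
            (algebraMap ℚ ℝ)).eval t = ∑ j : Fin p, (c m j : ℝ) * t ^ (j:ℕ) := by
        intro m
        simp [Polynomial.eval_finset_sum]
      have hbin : ((1 - t) * x + t * y) ^ (p - 1)
          = ∑ k ∈ Finset.range p, (t*u)^k * x^(p-1-k) * ((p-1).choose k : ℝ) := by
        rw [show (1 - t) * x + t * y = t*u + x by rw [hu]; ring, add_pow,
          show p - 1 + 1 = p by omega]
      rw [Finset.sum_mul]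
      rw [Finset.sum_congr rfl fun m _ => by rw [he m]]
      refine Finset.sum_congr rfl fun m _ => ?_
      rw [hbin, Finset.sum_mul, Finset.sum_mul_sum]
      refine Finset.sum_congr rfl fun j _ => Finset.sum_congr rfl fun k _ => ?_
      rw [hK]
      simp only [pow_add, mul_pow]
      ring
    rw [intervalIntegral.integral_congr (g := fun t =>
        ∑ m : Fin (p+1), ∑ j : Fin p, ∑ k ∈ Finset.range p, K m j k * t^((j:ℕ)+k))
        (fun t _ => hg t)]
    rw [intervalIntegral.integral_finset_sum (fun m _ => (by fun_prop :
        Continuous fun t : ℝ => ∑ j : Fin p, ∑ k ∈ Finset.range p,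
          K m j k * t^((j:ℕ)+k)).intervalIntegrable 0 1)]
    rw [Finset.sum_congr rfl fun m _ => intervalIntegral.integral_finset_sum (fun j _ =>
        (by fun_prop : Continuous fun t : ℝ => ∑ k ∈ Finset.range p,
          K m j k * t^((j:ℕ)+k)).intervalIntegrable 0 1)]
    rw [Finset.sum_congr rfl fun m _ => Finset.sum_congr rfl fun j _ =>
        intervalIntegral.integral_finset_sum (fun k _ =>
        (by fun_prop : Continuous fun t : ℝ => K m j k * t^((j:ℕ)+k)).intervalIntegrable 0 1)]
    rw [Finset.sum_congr rfl fun m _ => Finset.sum_congr rfl fun j _ =>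
        Finset.sum_congr rfl fun k _ => by
          rw [intervalIntegral.integral_const_mul, mono_int]]
    -- now collapse the sums
    rw [Finset.sum_congr rfl fun m (_ : m ∈ Finset.univ) =>
      Finset.sum_comm (s := (Finset.univ : Finset (Fin p))) (t := Finset.range p)
        (f := fun j k => K m j k * (1 / ((((j:ℕ) + k : ℕ) : ℝ) + 1)))]
    rw [Finset.sum_comm (s := (Finset.univ : Finset (Fin (p+1)))) (t := Finset.range p)]
    rw [hS]
    refine Finset.sum_congr rfl fun k hk => ?_
    rw [Finset.mem_range] at hk
    have hjsum : ∀ m : Fin (p+1),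
        (∑ j : Fin p, (c m j : ℝ) * (1 / ((((j:ℕ) + k : ℕ) : ℝ) + 1)))
          = (-1)^(m:ℕ) * (p:ℝ) * ((p-1-k).choose (m:ℕ) : ℝ) / ((k:ℝ)+1) := by
      intro m
      have h1 := congrFun (hc m) ⟨k, hk⟩
      simp only [Matrix.mulVecLin_apply, Matrix.mulVec, dotProduct, Hmat] at h1
      have h2 := congrArg (fun q : ℚ => (q : ℝ)) h1
      push_cast at h2 ⊢
      rw [← h2]
      exact Finset.sum_congr rfl fun j _ => by ring
    calc ∑ m : Fin (p+1), ∑ j : Fin p, K m j k * (1 / ((((j:ℕ) + k : ℕ) : ℝ) + 1))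
        = ∑ m : Fin (p+1), (u^k * x^(p-1-k) * ((p-1).choose k : ℝ)) *
            (δ^(m:ℕ) * (∑ j : Fin p, (c m j : ℝ) * (1 / ((((j:ℕ) + k : ℕ) : ℝ) + 1)))) := by
          refine Finset.sum_congr rfl fun m _ => ?_
          rw [Finset.mul_sum, Finset.mul_sum]
          exact Finset.sum_congr rfl fun j _ => by rw [hK]; ring
      _ = ∑ m : Fin (p+1), (u^k * x^(p-1-k) * ((p-1).choose k : ℝ)) *
            (δ^(m:ℕ) * ((-1)^(m:ℕ) * (p:ℝ) * ((p-1-k).choose (m:ℕ) : ℝ) / ((k:ℝ)+1))) := by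
          exact Finset.sum_congr rfl fun m _ => by rw [hjsum m]
      _ = (u^k * x^(p-1-k) * ((p-1).choose k : ℝ)) *
            ((p:ℝ)/((k:ℝ)+1) * ∑ m ∈ Finset.range (p+1), (-δ)^m * ((p-1-k).choose m : ℝ)) := by
          rw [← Fin.sum_univ_eq_sum_range
            (fun m => (-δ)^m * ((p-1-k).choose m : ℝ)) (p+1), Finset.mul_sum, Finset.mul_sum]
          refine Finset.sum_congr rfl fun m _ => ?_
          rw [neg_pow]
          ring
      _ = (u^k * x^(p-1-k) * ((p-1).choose k : ℝ)) *
            ((p:ℝ)/((k:ℝ)+1) * (1-δ)^(p-1-k)) := by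
          rw [neg_binom _ _ (by omega)]
  -- step 2: the LHS equals (y-x) * S
  have hfin : (y - δ * x) ^ p - (1 - δ) ^ p * x ^ p = (y - x) * S := by
    have h1 : y - δ * x = u + w := by rw [hu, hw]; ring
    have h2 : (1 - δ) ^ p * x ^ p = w ^ p := by rw [hw, mul_pow]
    rw [h1, h2, add_pow, Finset.sum_range_succ']
    simp only [pow_zero, Nat.sub_zero, Nat.choose_zero_right, Nat.cast_one, one_mul, mul_one]
    rw [add_sub_cancel_right, hS, Finset.mul_sum, ← hu]
    refine Finset.sum_congr rfl fun k hk => ?_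
    rw [Finset.mem_range] at hk
    have hch : ((p.choose (k+1) : ℝ)) * ((k:ℝ)+1) = (p:ℝ) * ((p-1).choose k : ℝ) := by
      have := Nat.add_one_mul_choose_eq (p-1) k
      rw [show p - 1 + 1 = p by omega] at this
      exact_mod_cast (congrArg (fun n : ℕ => (n : ℝ)) this).symm
    have hk1 : ((k:ℝ)+1) ≠ 0 := by positivity
    have hsub : p - (k+1) = p - 1 - k := by omega
    rw [hsub, hw, mul_pow]
    field_simp
    linear_combination (u^(k+1) * ((1-δ)^(p-1-k)) * (x^(p-1-k))) * hch
  rw [hfin]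
  congr 1
  exact hInt.symm
end

section
/- Let n ≥ 1. The set of positive definite hermitian n×n matrices is a connected component of the open set {A hermitian : det A > 0} inside the real vector space of hermitian n×n matrices. -/
open scoped ComplexOrder
open Matrix Set

namespace Stmt4Aux

variable {n : ℕ}

/-- The quadratic form of a hermitian matrix is real. -/
lemma quad_real {A : Matrix (Fin n) (Fin n) ℂ} (hA : A.IsHermitian) (x : Fin n → ℂ) :
    ((star x ⬝ᵥ A *ᵥ x).re : ℂ) = star x ⬝ᵥ A *ᵥ x := by
  apply Complex.conj_eq_iff_re.mp
  calc (starRingEnd ℂ) (star x ⬝ᵥ A *ᵥ x)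
      = star (star x ⬝ᵥ A *ᵥ x) := rfl
    _ = star (A *ᵥ x) ⬝ᵥ x := by rw [star_dotProduct, star_star]
    _ = (star x ᵥ* Aᴴ) ⬝ᵥ x := by rw [star_mulVec]
    _ = star x ⬝ᵥ A *ᵥ x := by rw [hA.eq, ← dotProduct_mulVec]

lemma pos_iff_re {A : Matrix (Fin n) (Fin n) ℂ} (hA : A.IsHermitian) (x : Fin n → ℂ) :
    0 < star x ⬝ᵥ A *ᵥ x ↔ 0 < (star x ⬝ᵥ A *ᵥ x).re := by
  constructor
  · intro h; exact (Complex.lt_def.mp h).1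
  · intro h
    rw [← quad_real hA x]
    exact Complex.zero_lt_real.mpr h

/-- A hermitian matrix whose quadratic form is positive on the unit sphere is
positive definite. -/
lemma posDef_of_sphere {A : Matrix (Fin n) (Fin n) ℂ} (hA : A.IsHermitian)
    (h : ∀ x ∈ Metric.sphere (0 : Fin n → ℂ) 1, 0 < (star x ⬝ᵥ A *ᵥ x).re) :
    A.PosDef := by
  refine PosDef.of_dotProduct_mulVec_pos hA (fun x hx => ?_)
  have hxn : ‖x‖ ≠ 0 := norm_ne_zero_iff.mpr hx
  set c : ℝ := ‖x‖⁻¹ with hc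
  have hcpos : 0 < c := inv_pos.mpr (norm_pos_iff.mpr hx)
  set y : Fin n → ℂ := (c : ℂ) • x with hy
  have hys : y ∈ Metric.sphere (0 : Fin n → ℂ) 1 := by
    simp only [mem_sphere_iff_norm, sub_zero, hy, norm_smul, Complex.norm_real,
      Real.norm_eq_abs, abs_of_pos hcpos, hc]
    field_simp
    rw [abs_of_pos (one_div_pos.mpr (norm_pos_iff.mpr hx)), mul_one_div_cancel hxn]
  have hq : star y ⬝ᵥ A *ᵥ y = ((c : ℂ) * (c : ℂ)) * (star x ⬝ᵥ A *ᵥ x) := by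
    rw [hy, star_smul, mulVec_smul, smul_dotProduct, dotProduct_smul]
    simp [Complex.star_def, Complex.conj_ofReal, smul_eq_mul, mul_assoc]
  have h1 := h y hys
  rw [hq] at h1
  rw [← Complex.ofReal_mul, ← quad_real hA x, ← Complex.ofReal_mul] at h1
  rw [Complex.ofReal_re] at h1
  rw [pos_iff_re hA]
  nlinarith [h1, mul_pos hcpos hcpos]

lemma sphere_of_posDef {A : Matrix (Fin n) (Fin n) ℂ} (hA : A.PosDef)
    {x : Fin n → ℂ} (hx : x ∈ Metric.sphere (0 : Fin n → ℂ) 1) :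
    0 < (star x ⬝ᵥ A *ᵥ x).re := by
  have hxne : x ≠ 0 := by
    intro h0
    simp [h0] at hx
  exact (pos_iff_re hA.1 x).mp (hA.dotProduct_mulVec_pos hxne)

lemma isOpen_posDef :
    IsOpen {A : {A : Matrix (Fin n) (Fin n) ℂ // A.IsHermitian} | A.1.PosDef} := by
  rw [isOpen_iff_mem_nhds]
  rintro A hA
  set K := Metric.sphere (0 : Fin n → ℂ) 1 with hK
  have hKc : IsCompact K := isCompact_sphere _ _
  set W : Set (Matrix (Fin n) (Fin n) ℂ × (Fin n → ℂ)) :=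
    {p | 0 < (star p.2 ⬝ᵥ p.1 *ᵥ p.2).re} with hW
  have hWo : IsOpen W := by
    have hc : Continuous fun p : Matrix (Fin n) (Fin n) ℂ × (Fin n → ℂ) =>
        (star p.2 ⬝ᵥ p.1 *ᵥ p.2).re :=
      Complex.continuous_re.comp
        ((continuous_star.comp continuous_snd).dotProduct
          (continuous_fst.matrix_mulVec continuous_snd))
    exact isOpen_lt continuous_const hc
  have hmem : W ∈ (nhds A.1) ×ˢ nhdsSet K := by
    refine hKc.mem_prod_nhdsSet_of_forall (fun x hx => ?_)
    rw [← nhds_prod_eq]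
    exact hWo.mem_nhds (sphere_of_posDef hA hx)
  rcases Filter.mem_prod_iff.mp hmem with ⟨t, ht, u, hu, hsub⟩
  have hKu : K ⊆ u := subset_of_mem_nhdsSet hu
  have hpre : Subtype.val ⁻¹' t ∈ nhds A :=
    continuous_subtype_val.continuousAt.preimage_mem_nhds ht
  refine Filter.mem_of_superset hpre ?_
  intro B hB
  exact posDef_of_sphere B.2 (fun x hx => hsub (Set.mk_mem_prod hB (hKu hx)))

lemma isClosed_posSemidef :
    IsClosed {A : {A : Matrix (Fin n) (Fin n) ℂ // A.IsHermitian} | A.1.PosSemidef} := by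
  have heq : {A : {A : Matrix (Fin n) (Fin n) ℂ // A.IsHermitian} | A.1.PosSemidef} =
      ⋂ x : Fin n → ℂ, {A : {A : Matrix (Fin n) (Fin n) ℂ // A.IsHermitian} |
        0 ≤ (star x ⬝ᵥ A.1 *ᵥ x).re ∧ (star x ⬝ᵥ A.1 *ᵥ x).im = 0} := by
    ext A
    simp only [mem_setOf_eq, mem_iInter]
    constructor
    · intro hA x
      rcases Complex.le_def.mp (hA.dotProduct_mulVec_nonneg x) with ⟨h1, h2⟩
      simpa using ⟨h1, h2.symm⟩
    · intro h
      refine PosSemidef.of_dotProduct_mulVec_nonneg A.2 (fun x => ?_)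
      rcases h x with ⟨h1, h2⟩
      rw [Complex.le_def]
      simpa using ⟨h1, h2.symm⟩
  rw [heq]
  refine isClosed_iInter (fun x => ?_)
  have hc : Continuous fun A : {A : Matrix (Fin n) (Fin n) ℂ // A.IsHermitian} =>
      star x ⬝ᵥ A.1 *ᵥ x :=
    (continuous_const).dotProduct (continuous_subtype_val.matrix_mulVec continuous_const)
  exact IsClosed.inter (isClosed_le continuous_const (Complex.continuous_re.comp hc))
    (isClosed_eq (Complex.continuous_im.comp hc) continuous_const)

lemma posDef_of_posSemidef_det_ne_zero {A : Matrix (Fin n) (Fin n) ℂ}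
    (hA : A.PosSemidef) (hdet : A.det ≠ 0) : A.PosDef := by
  refine PosDef.of_dotProduct_mulVec_pos hA.1 (fun x hx => lt_of_le_of_ne (hA.dotProduct_mulVec_nonneg x) (fun h => hx ?_))
  have h0 : A *ᵥ x = 0 := (hA.dotProduct_mulVec_zero_iff x).mp h.symm
  exact eq_zero_of_mulVec_eq_zero hdet h0

lemma hermitian_real_smul {A : Matrix (Fin n) (Fin n) ℂ} (hA : A.IsHermitian) (r : ℝ) :
    (r • A).IsHermitian := by
  have h : (r • A)ᴴ = r • Aᴴ := by
    ext i j
    simp [Matrix.conjTranspose_apply]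
  unfold Matrix.IsHermitian
  rw [h, hA.eq]

lemma convex_posDef : Convex ℝ {B : Matrix (Fin n) (Fin n) ℂ | B.PosDef} := by
  intro B hB C hC a b ha hb hab
  rcases ha.eq_or_lt with rfl | ha'
  · simpa [show b = 1 by linarith] using hC
  rcases hb.eq_or_lt with rfl | hb'
  · simpa [show a = 1 by linarith] using hB
  refine PosDef.of_dotProduct_mulVec_pos ((hermitian_real_smul hB.1 a).add (hermitian_real_smul hC.1 b)) (fun x hx => ?_)
  have h1 := (pos_iff_re hB.1 x).mp (hB.dotProduct_mulVec_pos hx)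
  have h2 := (pos_iff_re hC.1 x).mp (hC.dotProduct_mulVec_pos hx)
  rw [add_mulVec, dotProduct_add, smul_mulVec, smul_mulVec,
    dotProduct_smul, dotProduct_smul]
  have e : ∀ (r s : ℝ), a • ((r : ℂ)) + b • ((s : ℂ)) = ((a * r + b * s : ℝ) : ℂ) := by
    intro r s
    simp only [Complex.real_smul]
    push_cast
    ring
  rw [← quad_real hB.1 x, ← quad_real hC.1 x, e, Complex.zero_lt_real]
  have hm1 := mul_pos ha' h1
  have hm2 := mul_pos hb' h2
  linarith

lemma isPreconnected_posDef :
    IsPreconnected {A : {A : Matrix (Fin n) (Fin n) ℂ // A.IsHermitian} | A.1.PosDef} := by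
  have himg : Subtype.val '' {A : {A : Matrix (Fin n) (Fin n) ℂ // A.IsHermitian} | A.1.PosDef}
      = {B : Matrix (Fin n) (Fin n) ℂ | B.PosDef} := by
    ext B
    constructor
    · rintro ⟨A, hA, rfl⟩; exact hA
    · intro hB; exact ⟨⟨B, hB.1⟩, hB, rfl⟩
  have h2 : IsPreconnected (Subtype.val ''
      {A : {A : Matrix (Fin n) (Fin n) ℂ // A.IsHermitian} | A.1.PosDef}) := by
    rw [himg]
    exact convex_posDef.isPreconnected
  exact Topology.IsInducing.subtypeVal.isPreconnected_image.mp h2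

end Stmt4Aux

/-- inside the (real topological vector) space of hermitian `n×n` matrices,
the set of positive definite matrices is a connected component of the open set
`{A hermitian : det A > 0}` (det of a hermitian matrix being a positive real number). -/
theorem stmt_4 (n : ℕ) (hn : 1 ≤ n) :
    ∃ A₀ ∈ {A : {A : Matrix (Fin n) (Fin n) ℂ // A.IsHermitian} |
        ∃ r : ℝ, 0 < r ∧ A.1.det = (r : ℂ)},
      connectedComponentIn
        {A : {A : Matrix (Fin n) (Fin n) ℂ // A.IsHermitian} |
          ∃ r : ℝ, 0 < r ∧ A.1.det = (r : ℂ)} A₀ =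
      {A : {A : Matrix (Fin n) (Fin n) ℂ // A.IsHermitian} | A.1.PosDef} := by
  classical
  set T := {A : Matrix (Fin n) (Fin n) ℂ // A.IsHermitian}
  set S : Set T := {A : T | ∃ r : ℝ, 0 < r ∧ A.1.det = (r : ℂ)} with hS
  set P : Set T := {A : T | A.1.PosDef} with hP
  -- positive definite matrices have positive real determinant
  have hPS : P ⊆ S := by
    intro A hA
    have hdet : (0 : ℂ) < A.1.det := Matrix.PosDef.det_pos hA
    rcases Complex.lt_def.mp hdet with ⟨h1, h2⟩
    refine ⟨A.1.det.re, by simpa using h1, ?_⟩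
    apply Complex.ext <;> simp [← h2]
  have hA₀P : (⟨1, Matrix.isHermitian_one⟩ : T) ∈ P := Matrix.PosDef.one
  have hA₀S : (⟨1, Matrix.isHermitian_one⟩ : T) ∈ S := hPS hA₀P
  refine ⟨⟨1, Matrix.isHermitian_one⟩, hA₀S, ?_⟩
  apply Set.Subset.antisymm
  · -- the connected component is contained in P
    set s := connectedComponentIn S (⟨1, Matrix.isHermitian_one⟩ : T) with hs
    have hsp : IsPreconnected s := isPreconnected_connectedComponentIn
    have hsS : s ⊆ S := connectedComponentIn_subset _ _
    set v : Set T := {A : T | A.1.PosSemidef}ᶜ with hv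
    have hvo : IsOpen v := Stmt4Aux.isClosed_posSemidef.isOpen_compl
    have hcover : s ⊆ P ∪ v := by
      intro B hB
      rcases hsS hB with ⟨r, hr, hrdet⟩
      by_cases hps : B.1.PosSemidef
      · left
        refine Stmt4Aux.posDef_of_posSemidef_det_ne_zero hps ?_
        rw [hrdet]
        exact_mod_cast ne_of_gt (Complex.zero_lt_real.mpr hr)
      · right; exact hps
    have hdisj : s ∩ (P ∩ v) = ∅ := by
      ext B
      simp only [mem_inter_iff, mem_empty_iff_false, iff_false, not_and, hv, mem_compl_iff,
        mem_setOf_eq, not_not]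
      intro _ hBP
      exact hBP.posSemidef
    have h1mem : (⟨1, Matrix.isHermitian_one⟩ : T) ∈ s := mem_connectedComponentIn hA₀S
    by_contra hcontra
    have hsv : (s ∩ v).Nonempty := by
      rcases not_subset.mp hcontra with ⟨B, hBs, hBP⟩
      rcases hcover hBs with h | h
      · exact absurd h hBP
      · exact ⟨B, hBs, h⟩
    have := hsp P v Stmt4Aux.isOpen_posDef hvo hcover ⟨_, h1mem, hA₀P⟩ hsv
    rw [hdisj] at this
    exact this.ne_empty rfl
  · -- P is contained in the connected component
    exact Stmt4Aux.isPreconnected_posDef.subset_connectedComponentIn hA₀P hPS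
end
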